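/- Let V be a finite type and μ : V → V → ℝ a symmetric function with 0 ≤ μ x y for all x, y, and define the Dirichlet energy E(f) = (1/2) * ∑_{x ∈ V} ∑_{y ∈ V} μ x y * (f x - f y)^2. Fix x, y ∈ V with x ≠ y and let ρ = ⨅_{g : V → ℝ, g x = 1, g y = 0} E(g) (an infimum of real numbers over a nonempty set bounded below by 0). Then for every f : V → ℝ, (f x - f y)^2 * ρ ≤ E(f). -/

import Mathlib

/-- Lemma 3.1, first assertion: `|f(x) - f(y)|² ≤ R(x,y) E(f,f)`, stated in the
form `|f(x) - f(y)|² ⋅ R(x,y)⁻¹ ≤ E(f,f)` where `R(x,y)⁻¹ = ρ` is the infimum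
of the energies of potentials `g` with `g x = 1`, `g y = 0`. -/
theorem effective_resistance_inequality
    {V : Type*} [Fintype V] (μ : V → V → ℝ)
    (hsym : ∀ x y, μ x y = μ y x) (hnonneg : ∀ x y, 0 ≤ μ x y)
    (E : (V → ℝ) → ℝ)
    (hE : ∀ f, E f = (1 / 2) * ∑ x, ∑ y, μ x y * (f x - f y) ^ 2)
    (x y : V) (hxy : x ≠ y)
    (ρ : ℝ) (hρ : ρ = ⨅ g : {g : V → ℝ // g x = 1 ∧ g y = 0}, E g.1) :
    ∀ f : V → ℝ, (f x - f y) ^ 2 * ρ ≤ E f := by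
  have hEnn : ∀ f, 0 ≤ E f := by
    intro f
    rw [hE]
    apply mul_nonneg (by norm_num)
    apply Finset.sum_nonneg; intro a _
    apply Finset.sum_nonneg; intro b _
    exact mul_nonneg (hnonneg a b) (sq_nonneg _)
  intro f
  by_cases hc : f x = f y
  · simp [hc]; exact hEnn f
  · set c : ℝ := f x - f y with hcdef
    have hc0 : c ≠ 0 := sub_ne_zero.mpr hc
    set g : V → ℝ := fun v => (f v - f y) / c with hg
    have hgx : g x = 1 := by simp [hg, div_self hc0]; exact div_self hc0
    have hgy : g y = 0 := by simp [hg]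
    have hEg : E g = E f / c ^ 2 := by
      rw [hE, hE]
      rw [eq_div_iff (pow_ne_zero 2 hc0), mul_assoc, Finset.sum_mul]
      congr 1
      apply Finset.sum_congr rfl; intro a _
      rw [Finset.sum_mul]
      apply Finset.sum_congr rfl; intro b _
      have hgd : g a - g b = (f a - f b) / c := by
        simp [hg]; ring
      rw [hgd, div_pow]
      field_simp
    have hbdd : BddBelow (Set.range fun g : {g : V → ℝ // g x = 1 ∧ g y = 0} => E g.1) := by
      refine ⟨0, ?_⟩
      rintro _ ⟨g, rfl⟩
      exact hEnn g.1
    have hle : ρ ≤ E g := by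
      rw [hρ]
      exact ciInf_le hbdd ⟨g, hgx, hgy⟩
    calc c ^ 2 * ρ ≤ c ^ 2 * E g := by
          apply mul_le_mul_of_nonneg_left hle (sq_nonneg c)
      _ = E f := by rw [hEg]; field_simp
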